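/- arXiv:1904.02011 — 4 statements merged into one kernel-verified Lean document; each statement's English description precedes it below -/
import Mathlib

section
/- For a convex cyclic quadrilateral ABCD with diagonals AC and BD intersecting at P, the ratio PA/PC equals (AB·AD)/(CB·CD). -/
open EuclideanGeometry

/-- For a convex cyclic quadrilateral `ABCD` (the diagonals of a convex quadrilateral
intersect, at `P`), the ratio `PA/PC` equals `(AB·AD)/(CB·CD)`. -/
theorem dist_div_dist_eq_of_cyclic_quadrilateral
    (A B C D P O : EuclideanSpace ℝ (Fin 2)) (r : ℝ)
    (hA : A ∈ Metric.sphere O r) (hB : B ∈ Metric.sphere O r)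
    (hC : C ∈ Metric.sphere O r) (hD : D ∈ Metric.sphere O r)
    (hne : Function.Injective ![A, B, C, D])
    (hP1 : P ∈ segment ℝ A C) (hP2 : P ∈ segment ℝ B D) :
    dist P A / dist P C = (dist A B * dist A D) / (dist C B * dist C D) := by
  have hAB : A ≠ B := fun h => (by decide : (0:Fin 4) ≠ 1) (hne (by simpa using h))
  have hAC : A ≠ C := fun h => (by decide : (0:Fin 4) ≠ 2) (hne (by simpa using h))
  have hAD : A ≠ D := fun h => (by decide : (0:Fin 4) ≠ 3) (hne (by simpa using h))
  have hBC : B ≠ C := fun h => (by decide : (1:Fin 4) ≠ 2) (hne (by simpa using h))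
  have hBD : B ≠ D := fun h => (by decide : (1:Fin 4) ≠ 3) (hne (by simpa using h))
  have hCD : C ≠ D := fun h => (by decide : (2:Fin 4) ≠ 3) (hne (by simpa using h))
  have hmem : ∀ X ∈ ({A, B, C, D} : Set (EuclideanSpace ℝ (Fin 2))), dist X O = r := by
    rintro X (rfl | rfl | rfl | rfl) <;> simpa using ‹_›
  have hcosp : Cospherical ({A, B, C, D} : Set (EuclideanSpace ℝ (Fin 2))) := ⟨O, r, hmem⟩
  have hw1 : Wbtw ℝ A P C := mem_segment_iff_wbtw.mp hP1
  have hw2 : Wbtw ℝ B P D := mem_segment_iff_wbtw.mp hP2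
  -- P is distinct from all four vertices
  have key : ∀ X Y Z : EuclideanSpace ℝ (Fin 2),
      X ∈ ({A, B, C, D} : Set _) → Y ∈ ({A, B, C, D} : Set _) → Z ∈ ({A, B, C, D} : Set _) →
      X ≠ Y → X ≠ Z → Y ≠ Z → ¬ Wbtw ℝ X Y Z := by
    intro X Y Z hX hY hZ hXY hXZ hYZ hw
    exact affineIndependent_iff_not_collinear_set.mp
      (hcosp.affineIndependent_of_mem_of_ne hX hY hZ hXY hXZ hYZ) hw.collinear
  have hPA : P ≠ A := fun h => by
    rw [h] at hw2; exact key B A D (by simp) (by simp) (by simp) hAB.symm hBD hAD hw2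
  have hPC : P ≠ C := fun h => by
    rw [h] at hw2; exact key B C D (by simp) (by simp) (by simp) hBC hBD hCD hw2
  have hPB : P ≠ B := fun h => by
    rw [h] at hw1; exact key A B C (by simp) (by simp) (by simp) hAB hAC hBC hw1
  have hPD : P ≠ D := fun h => by
    rw [h] at hw1; exact key A D C (by simp) (by simp) (by simp) hAD hAC hCD.symm hw1
  have hapc : ∠ A P C = Real.pi := angle_eq_pi_iff_sbtw.mpr ⟨hw1, hPA, hPC⟩
  have hbpd : ∠ B P D = Real.pi := angle_eq_pi_iff_sbtw.mpr ⟨hw2, hPB, hPD⟩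
  have h' : Cospherical ({A, C, B, D} : Set (EuclideanSpace ℝ (Fin 2))) := by
    rwa [Set.insert_comm C B {D}]
  have hmul : dist A P * dist C P = dist B P * dist D P :=
    mul_dist_eq_mul_dist_of_cospherical_of_angle_eq_pi h' hapc hbpd
  have hbp : dist B P ≠ 0 := left_dist_ne_zero_of_angle_eq_pi hbpd
  have hap : dist A P ≠ 0 := left_dist_ne_zero_of_angle_eq_pi hapc
  have hcp : dist C P ≠ 0 := right_dist_ne_zero_of_angle_eq_pi hapc
  have h₁ : dist C D = dist C P / dist B P * dist A B := by
    rw [dist_mul_of_eq_angle_of_dist_mul B P A C P D, dist_comm A B]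
    · rw [angle_eq_angle_of_angle_eq_pi_of_angle_eq_pi hbpd hapc, angle_comm]
    all_goals field_simp [mul_comm, hmul]
    linarith [hmul]
  have h₂ : dist D A = dist A P / dist B P * dist B C := by
    rw [dist_mul_of_eq_angle_of_dist_mul C P B D P A, dist_comm C B]
    · rwa [angle_comm, angle_eq_angle_of_angle_eq_pi_of_angle_eq_pi]; rwa [angle_comm]
    all_goals field_simp [mul_comm, hmul]
    linarith [hmul]
  have hab : dist A B ≠ 0 := by simpa using hAB
  have hcb : dist C B ≠ 0 := by simpa using hBC.symm
  rw [dist_comm P A, dist_comm P C, dist_comm A D, h₂, dist_comm C B, h₁,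
    dist_comm B C]
  field_simp
end

section
/- Let ABC be a triangle inscribed in a circle ω, let P be an interior point with homogeneous barycentric coordinates (x : y : z), let E and F be the traces of P on CA and AB respectively (so E = (x:0:z), F = (x:y:0)), and let Q be an intersection of line EF with ω. Then CA/(y·QB) = BC/(x·QA) + AB/(z·QC), provided the signs are arranged so that Q lies on ray EF beyond the appropriate side. -/
open EuclideanGeometry Affine

open RealInnerProductSpace

private lemma expand_sq {V : Type*} [NormedAddCommGroup V] [InnerProductSpace ℝ V]
    (s τ : ℝ) (u v : V) :
    ‖s•u + τ•v‖^2 = s^2*‖u‖^2 + 2*(s*τ)*⟪u, v⟫ + τ^2*‖v‖^2 := by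
  rw [norm_add_sq_real, norm_smul, norm_smul, real_inner_smul_left, real_inner_smul_right]
  simp [mul_pow, sq_abs]
  ring

private lemma pos_of_mul_eq_pos {L d s : ℝ} (hd : 0 < d) (hs : 0 < s) (h : L * d = s) :
    0 < L := by
  by_contra hc
  push_neg at hc
  have : L * d ≤ 0 := mul_nonpos_of_nonpos_of_nonneg hc hd.le
  linarith

private lemma eq_of_sq_eq {a b : ℝ} (ha : 0 ≤ a) (hb : 0 ≤ b) (h : a^2 = b^2) : a = b := by
  rw [← Real.sqrt_sq ha, ← Real.sqrt_sq hb, h]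

set_option maxHeartbeats 1000000 in
/-- Let `ABC` be a triangle inscribed in a circle `ω`, let `P` be an interior point with
homogeneous barycentric coordinates `(x : y : z)` (`x, y, z > 0`), with traces
`E = (x : 0 : z)` on `CA` and `F = (x : y : 0)` on `AB`, and let `Q` be the intersection
of ray `EF` with `ω`.  Then `CA/(y·QB) = BC/(x·QA) + AB/(z·QC)`. -/
theorem barycentric_trace_circle_identity
    (A B C Q O : EuclideanSpace ℝ (Fin 2)) (r : ℝ) (x y z : ℝ)
    (hx : 0 < x) (hy : 0 < y) (hz : 0 < z)
    (hABC : AffineIndependent ℝ ![A, B, C])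
    (hA : A ∈ Metric.sphere O r) (hB : B ∈ Metric.sphere O r)
    (hC : C ∈ Metric.sphere O r) (hQ : Q ∈ Metric.sphere O r)
    -- `E` is the trace of `P` on `CA` and `F` the trace on `AB`
    (E : EuclideanSpace ℝ (Fin 2)) (hE : E = AffineMap.lineMap A C (z / (x + z)))
    (F : EuclideanSpace ℝ (Fin 2)) (hF : F = AffineMap.lineMap A B (y / (x + y)))
    -- `Q` lies on the ray from `E` through `F`
    (hray : ∃ t : ℝ, 0 ≤ t ∧ Q = AffineMap.lineMap E F t) :
    dist C A / (y * dist Q B) = dist B C / (x * dist Q A) + dist A B / (z * dist Q C) := by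
  obtain ⟨t, ht0, hQt⟩ := hray
  -- abbreviations
  set μ : ℝ := z / (x + z) with hμ_def
  set ν : ℝ := y / (x + y) with hν_def
  have hμ0 : 0 < μ := by positivity
  have hν0 : 0 < ν := by positivity
  have hμ1 : μ < 1 := by rw [hμ_def, div_lt_one (by linarith)]; linarith
  have hν1 : ν < 1 := by rw [hν_def, div_lt_one (by linarith)]; linarith
  set L2 : ℝ := t * ν with hL2_def
  set L3 : ℝ := μ * (1 - t) with hL3_def
  set L1 : ℝ := 1 - L2 - L3 with hL1_def
  set u : EuclideanSpace ℝ (Fin 2) := B - A with hu_def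
  set v : EuclideanSpace ℝ (Fin 2) := C - A with hv_def
  set g : EuclideanSpace ℝ (Fin 2) := A - O with hg_def
  -- the key vector decomposition
  have hw : Q - A = L2 • u + L3 • v := by
    subst hE hF hQt
    simp only [AffineMap.lineMap_apply, vsub_eq_sub, vadd_eq_add, hu_def, hv_def,
      hL2_def, hL3_def]
    module
  have hwB : Q - B = (L2 - 1) • u + L3 • v := by
    have h1 : Q - B = (Q - A) - u := by rw [hu_def]; abel
    rw [h1, hw]; module
  have hwC : Q - C = L2 • u + (L3 - 1) • v := by
    have h1 : Q - C = (Q - A) - v := by rw [hv_def]; abel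
    rw [h1, hw]; module
  -- side lengths
  set a : ℝ := dist B C with ha_def
  set b : ℝ := dist C A with hb_def
  set c : ℝ := dist A B with hc_def
  set dQA : ℝ := dist Q A with hdQA_def
  set dQB : ℝ := dist Q B with hdQB_def
  set dQC : ℝ := dist Q C with hdQC_def
  have hAB : A ≠ B := by
    intro h
    exact (hABC.injective.ne (show (0 : Fin 3) ≠ 1 by decide)) (by simpa using h)
  have hBC : B ≠ C := by
    intro h
    exact (hABC.injective.ne (show (1 : Fin 3) ≠ 2 by decide)) (by simpa using h)
  have hCA : C ≠ A := by
    intro h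
    exact (hABC.injective.ne (show (2 : Fin 3) ≠ 0 by decide)) (by simpa using h)
  have ha0 : 0 < a := dist_pos.2 hBC
  have hb0 : 0 < b := dist_pos.2 hCA
  have hc0 : 0 < c := dist_pos.2 hAB
  -- norms
  have hcu : c = ‖u‖ := by rw [hc_def, dist_eq_norm', hu_def]
  have hbv : b = ‖v‖ := by rw [hb_def, dist_eq_norm, hv_def]
  set iuv : ℝ := ⟪u, v⟫ with hiuv_def
  have ha2 : a^2 = c^2 - 2*iuv + b^2 := by
    have h1 : a = ‖u - v‖ := by
      rw [ha_def, dist_eq_norm, hu_def, hv_def]; congr 1; abel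
    rw [h1, norm_sub_sq_real, hcu, hbv, hiuv_def]
  have hiuv : 2*iuv = b^2 + c^2 - a^2 := by linarith
  -- sphere conditions
  have hAO : ‖g‖ = r := by rw [hg_def, ← dist_eq_norm]; exact Metric.mem_sphere.mp hA
  have hBO : ‖g + u‖ = r := by
    have h1 : g + u = B - O := by rw [hg_def, hu_def]; abel
    rw [h1, ← dist_eq_norm]; exact Metric.mem_sphere.mp hB
  have hCO : ‖g + v‖ = r := by
    have h1 : g + v = C - O := by rw [hg_def, hv_def]; abel
    rw [h1, ← dist_eq_norm]; exact Metric.mem_sphere.mp hC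
  have hQO : ‖g + (L2 • u + L3 • v)‖ = r := by
    have h1 : g + (L2 • u + L3 • v) = Q - O := by rw [hg_def, ← hw]; abel
    rw [h1, ← dist_eq_norm]; exact Metric.mem_sphere.mp hQ
  have higu : 2*⟪g, u⟫ + c^2 = 0 := by
    have h1 : ‖g + u‖^2 = ‖g‖^2 := by rw [hAO, hBO]
    rw [norm_add_sq_real] at h1
    rw [hcu]; linarith
  have higv : 2*⟪g, v⟫ + b^2 = 0 := by
    have h1 : ‖g + v‖^2 = ‖g‖^2 := by rw [hAO, hCO]
    rw [norm_add_sq_real] at h1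
    rw [hbv]; linarith
  -- squared distances from Q
  have hQA2q : dQA^2 = L2^2*c^2 + 2*(L2*L3)*iuv + L3^2*b^2 := by
    rw [hdQA_def, dist_eq_norm, hw, expand_sq, ← hcu, ← hbv, hiuv_def]
  have hQsph : dQA^2 + 2*(L2*⟪g, u⟫ + L3*⟪g, v⟫) = 0 := by
    have h1 : ‖g + (L2 • u + L3 • v)‖^2 = ‖g‖^2 := by rw [hQO, hAO]
    rw [norm_add_sq_real, inner_add_right, real_inner_smul_right, real_inner_smul_right] at h1
    have h2 : dQA^2 = ‖L2 • u + L3 • v‖^2 := by rw [hdQA_def, dist_eq_norm, hw]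
    rw [h2]; linarith
  have hQA2 : dQA^2 = L2*c^2 + L3*b^2 := by
    linear_combination hQsph - L2*higu - L3*higv
  have hQB2q : dQB^2 = (L2-1)^2*c^2 + 2*((L2-1)*L3)*iuv + L3^2*b^2 := by
    rw [hdQB_def, dist_eq_norm, hwB, expand_sq, ← hcu, ← hbv, hiuv_def]
  have hQC2q : dQC^2 = L2^2*c^2 + 2*(L2*(L3-1))*iuv + (L3-1)^2*b^2 := by
    rw [hdQC_def, dist_eq_norm, hwC, expand_sq, ← hcu, ← hbv, hiuv_def]
  -- the conic relation
  have hG : c^2*(L1*L2) + b^2*(L1*L3) + a^2*(L2*L3) = 0 := by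
    rw [hL1_def]; linear_combination hQA2q - hQA2 + L2*L3*hiuv
  have hQB2 : dQB^2 = L1*c^2 + L3*a^2 := by
    rw [hL1_def]; linear_combination hQB2q - hQA2q + hQA2 - L3*hiuv
  have hQC2 : dQC^2 = L1*b^2 + L2*a^2 := by
    rw [hL1_def]; linear_combination hQC2q - hQA2q + hQA2 - L2*hiuv
  -- nondegeneracy
  have hli : LinearIndependent ℝ ![u, v] := by
    have h := (affineIndependent_iff_linearIndependent_vsub ℝ ![A,B,C] 0).mp hABC
    let e : Fin 2 → {i : Fin 3 // i ≠ 0} := ![⟨1, by decide⟩, ⟨2, by decide⟩]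
    have he : Function.Injective e := by decide
    have h2 := h.comp e he
    rw [hu_def, hv_def]
    convert h2 using 1
    funext i
    fin_cases i <;> simp [e, vsub_eq_sub]
    rfl
  have hker : ∀ s τ : ℝ, s • u + τ • v = 0 → s = 0 ∧ τ = 0 := fun s τ h =>
    hli.eq_zero_of_pair h
  have hQA0 : 0 < dQA := by
    rw [hdQA_def, dist_pos]
    intro h
    have h0 : L2 • u + L3 • v = 0 := by rw [← hw, h, sub_self]
    obtain ⟨h2, h3⟩ := hker _ _ h0
    rw [hL2_def] at h2
    rw [hL3_def] at h3
    rcases mul_eq_zero.mp h2 with h | h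
    · rw [h] at h3; simp at h3; linarith
    · linarith
  have hQB0 : 0 < dQB := by
    rw [hdQB_def, dist_pos]
    intro h
    have h0 : (L2 - 1) • u + L3 • v = 0 := by rw [← hwB, h, sub_self]
    obtain ⟨h2, h3⟩ := hker _ _ h0
    rw [hL3_def] at h3
    rcases mul_eq_zero.mp h3 with h' | h'
    · linarith
    · have ht1 : t = 1 := by linarith
      rw [hL2_def, ht1] at h2; simp at h2; linarith
  have hQC0 : 0 < dQC := by
    rw [hdQC_def, dist_pos]
    intro h
    have h0 : L2 • u + (L3 - 1) • v = 0 := by rw [← hwC, h, sub_self]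
    obtain ⟨h2, h3⟩ := hker _ _ h0
    rw [hL2_def] at h2
    rcases mul_eq_zero.mp h2 with h' | h'
    · rw [hL3_def, h'] at h3; simp at h3; linarith
    · linarith
  -- Q is beyond F : t > 1
  have ht1 : 1 < t := by
    by_contra hcon
    push_neg at hcon
    have hL2n : 0 ≤ L2 := by rw [hL2_def]; positivity
    have hL3n : 0 ≤ L3 := by rw [hL3_def]; exact mul_nonneg hμ0.le (by linarith)
    have hL1p : 0 < L1 := by
      rw [hL1_def, hL2_def, hL3_def]
      rcases lt_or_ge t 1 with h | h
      · linarith [mul_pos (by linarith : (0:ℝ) < 1-μ) (by linarith : (0:ℝ) < 1-t),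
          mul_nonneg (by linarith : (0:ℝ) ≤ 1-ν) ht0]
      · have ht' : t = 1 := le_antisymm hcon h
        rw [ht']
        have h9 : μ * (1 - (1:ℝ)) = 0 := by ring
        linarith [h9]
    rcases eq_or_lt_of_le ht0 with h | h
    · have hL2z : L2 = 0 := by rw [hL2_def, ← h]; ring
      have hL3z : L3 = μ := by rw [hL3_def, ← h]; ring
      rw [hL2z, hL3z] at hG
      linarith [mul_pos (mul_pos (mul_pos hb0 hb0) hL1p) hμ0, hG,
        (by ring : c^2*(L1*0) + b^2*(L1*μ) + a^2*(0*μ) = b^2*(L1*μ))]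
    · have hL2p : 0 < L2 := by rw [hL2_def]; positivity
      have t1 : 0 < c^2*(L1*L2) := mul_pos (by positivity) (mul_pos hL1p hL2p)
      have t2 : 0 ≤ b^2*(L1*L3) := mul_nonneg (by positivity) (mul_nonneg hL1p.le hL3n)
      have t3 : 0 ≤ a^2*(L2*L3) := mul_nonneg (by positivity) (mul_nonneg hL2n hL3n)
      linarith
  have hL2p : 0 < L2 := by rw [hL2_def]; positivity
  have hL3n : L3 < 0 := by
    rw [hL3_def]; exact mul_neg_of_pos_of_neg hμ0 (by linarith)
  have hL1p : 0 < L1 := by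
    have h1 : L1 * dQA^2 = a^2 * (L2 * (-L3)) := by
      rw [hQA2]; linear_combination hG
    exact pos_of_mul_eq_pos (by positivity)
      (mul_pos (by positivity) (mul_pos hL2p (by linarith : (0:ℝ) < -L3))) h1
  -- three product identities
  have e1 : (a*dQA)*(c*dQC) = a^2*c^2*L2 := by
    apply eq_of_sq_eq (by positivity) (mul_nonneg (by positivity) hL2p.le)
    have h1 : dQA^2 * dQC^2 = a^2*c^2*L2^2 := by
      rw [hQA2, hQC2]; linear_combination b^2 * hG
    linear_combination (a^2*c^2) * h1
  have e2 : (b*dQB)*(c*dQC) = b^2*c^2*L1 := by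
    apply eq_of_sq_eq (by positivity) (mul_nonneg (by positivity) hL1p.le)
    have h1 : dQB^2 * dQC^2 = b^2*c^2*L1^2 := by
      rw [hQB2, hQC2]; linear_combination a^2 * hG
    linear_combination (b^2*c^2) * h1
  have e3 : (a*dQA)*(b*dQB) = a^2*b^2*(-L3) := by
    apply eq_of_sq_eq (by positivity) (mul_nonneg (by positivity) (by linarith))
    have h1 : dQA^2 * dQB^2 = a^2*b^2*L3^2 := by
      rw [hQA2, hQB2]; linear_combination c^2 * hG
    linear_combination (a^2*b^2) * h1
  -- the line relation
  have e4 : y*z*L1 = x*z*L2 + x*y*L3 := by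
    rw [hL1_def, hL2_def, hL3_def, hμ_def, hν_def]
    field_simp
    ring
  -- assemble
  have habc : (0:ℝ) < a*b*c := by positivity
  have T : (a*b*c) * (b*((x*dQA)*(z*dQC))) =
      (a*b*c) * (a*((y*dQB)*(z*dQC)) + c*((x*dQA)*(y*dQB))) := by
    linear_combination (x*z*b^2)*e1 - (y*z*a^2)*e2 - (x*y*c^2)*e3 - (a^2*b^2*c^2)*e4
  have T' := mul_left_cancel₀ habc.ne' T
  have hxQA : x*dQA ≠ 0 := (mul_pos hx hQA0).ne'
  have hyQB : y*dQB ≠ 0 := (mul_pos hy hQB0).ne'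
  have hzQC : z*dQC ≠ 0 := (mul_pos hz hQC0).ne'
  rw [div_add_div _ _ hxQA hzQC, div_eq_div_iff hyQB (mul_ne_zero hxQA hzQC)]
  linear_combination T'
end

section
/- Let ABC be a triangle inscribed in circle ω, let P and S be points of ω with PS parallel to BC, and let the line PS meet lines AB and AC at Q and R respectively. Then (QS/RS)·(RA/QA) = SB/SC. -/
open EuclideanGeometry Affine RealInnerProductSpace

private lemma inner_expand3 (u v w : EuclideanSpace ℝ (Fin 2)) (s t : ℝ) :
    ⟪s•u + t•v + w, s•u + t•v + w⟫ =
      s^2*⟪u,u⟫ + t^2*⟪v,v⟫ + ⟪w,w⟫ + 2*s*t*⟪u,v⟫ + 2*s*⟪u,w⟫ + 2*t*⟪v,w⟫ := by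
  simp only [inner_add_left, inner_add_right, real_inner_smul_left, real_inner_smul_right,
    real_inner_comm v u, real_inner_comm w u, real_inner_comm w v]
  ring

private lemma inner_expand2 (u v : EuclideanSpace ℝ (Fin 2)) (s t : ℝ) :
    ⟪s•u + t•v, s•u + t•v⟫ = s^2*⟪u,u⟫ + 2*s*t*⟪u,v⟫ + t^2*⟪v,v⟫ := by
  simp only [inner_add_left, inner_add_right, real_inner_smul_left, real_inner_smul_right,
    real_inner_comm v u]
  ring

private lemma sphere_inner_eq {O X : EuclideanSpace ℝ (Fin 2)} {r : ℝ}
    (hX : X ∈ Metric.sphere O r) : ⟪X - O, X - O⟫ = r^2 := by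
  rw [real_inner_self_eq_norm_sq, ← dist_eq_norm]
  rw [Metric.mem_sphere] at hX
  rw [hX]

/-- Let `ABC` be inscribed in a circle, `P`, `S` points of the circle with `PS ∥ BC`,
and let line `PS` meet lines `AB`, `AC` at `Q`, `R` respectively. Then
`(QS/RS)·(RA/QA) = SB/SC`. -/
theorem ratio_product_eq_of_parallel_chord
    (A B C P S Q R O : EuclideanSpace ℝ (Fin 2)) (r : ℝ)
    (hABC : AffineIndependent ℝ ![A, B, C])
    (hA : A ∈ Metric.sphere O r) (hB : B ∈ Metric.sphere O r)
    (hC : C ∈ Metric.sphere O r) (hP : P ∈ Metric.sphere O r)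
    (hS : S ∈ Metric.sphere O r) (hPS : P ≠ S)
    (hPB : P ≠ B) (hPC : P ≠ C) (hSB : S ≠ B) (hSC : S ≠ C)
    (hpar : line[ℝ, P, S] ∥ line[ℝ, B, C])
    (hQ1 : Q ∈ line[ℝ, P, S]) (hQ2 : Q ∈ line[ℝ, A, B])
    (hR1 : R ∈ line[ℝ, P, S]) (hR2 : R ∈ line[ℝ, A, C])
    (hQA : Q ≠ A) (hRS : R ≠ S) :
    (dist Q S / dist R S) * (dist R A / dist Q A) = dist S B / dist S C := by
  -- basic nondegeneracy
  have hAB : A ≠ B := by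
    intro h
    exact (by decide : ((0:Fin 3) ≠ 1))
      (hABC.injective (show ![A,B,C] 0 = ![A,B,C] 1 by simpa using h))
  have hBC : B ≠ C := by
    intro h
    exact (by decide : ((1:Fin 3) ≠ 2))
      (hABC.injective (show ![A,B,C] 1 = ![A,B,C] 2 by simpa using h))
  -- linear independence of B-A, C-A
  have key : ∀ x y : ℝ, x • (B - A) + y • (C - A) = 0 → x = 0 ∧ y = 0 := by
    have hli := (affineIndependent_iff_linearIndependent_vsub ℝ ![A,B,C] 0).mp hABC
    have h2 : LinearIndependent ℝ ![B - A, C - A] := by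
      have hinj : Function.Injective
          (![⟨1, by decide⟩, ⟨2, by decide⟩] : Fin 2 → {x : Fin 3 // x ≠ 0}) := by decide
      have h3 := hli.comp _ hinj
      convert h3 using 1
      funext i
      fin_cases i <;> simp [vsub_eq_sub]
      rfl
    exact fun x y h => LinearIndependent.pair_iff.mp h2 x y h
  -- coefficients along the lines
  have hQSd : Q -ᵥ S ∈ (line[ℝ,B,C]).direction :=
    hpar.direction_eq ▸ AffineSubspace.vsub_mem_direction hQ1 (right_mem_affineSpan_pair ℝ P S)
  have hRSd : R -ᵥ S ∈ (line[ℝ,B,C]).direction :=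
    hpar.direction_eq ▸ AffineSubspace.vsub_mem_direction hR1 (right_mem_affineSpan_pair ℝ P S)
  rw [direction_affineSpan, vectorSpan_pair] at hQSd hRSd
  obtain ⟨l, hl⟩ := Submodule.mem_span_singleton.mp hQSd
  obtain ⟨m, hm⟩ := Submodule.mem_span_singleton.mp hRSd
  have hl' : Q - S = l • (B - C) := by simpa [vsub_eq_sub] using hl.symm
  have hm' : R - S = m • (B - C) := by simpa [vsub_eq_sub] using hm.symm
  have hQAd : Q -ᵥ A ∈ (line[ℝ,A,B]).direction :=
    AffineSubspace.vsub_mem_direction hQ2 (left_mem_affineSpan_pair ℝ A B)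
  have hRAd : R -ᵥ A ∈ (line[ℝ,A,C]).direction :=
    AffineSubspace.vsub_mem_direction hR2 (left_mem_affineSpan_pair ℝ A C)
  rw [direction_affineSpan, vectorSpan_pair] at hQAd hRAd
  obtain ⟨q', hq⟩ := Submodule.mem_span_singleton.mp hQAd
  obtain ⟨r', hr⟩ := Submodule.mem_span_singleton.mp hRAd
  have hq' : Q - A = q' • (A - B) := by simpa [vsub_eq_sub] using hq.symm
  have hr' : R - A = r' • (A - C) := by simpa [vsub_eq_sub] using hr.symm
  -- relate the coefficients
  have hcomb : (-q' - l + m) • (B - A) + (r' + l - m) • (C - A) = 0 := by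
    have h1 : (Q - A) - (R - A) - (Q - S) + (R - S) = 0 := by abel
    rw [hq', hr', hl', hm'] at h1
    linear_combination (norm := module) h1
  obtain ⟨hx, hy⟩ := key _ _ hcomb
  have hqv : q' = m - l := by linarith
  have hrv : r' = m - l := by linarith
  -- distances along the transversal
  have dQS : dist Q S = |l| * dist B C := by
    rw [dist_eq_norm, dist_eq_norm, hl', norm_smul, Real.norm_eq_abs]
  have dRS : dist R S = |m| * dist B C := by
    rw [dist_eq_norm, dist_eq_norm, hm', norm_smul, Real.norm_eq_abs]
  have dQA : dist Q A = |m - l| * dist A B := by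
    rw [dist_eq_norm, hq', hqv, norm_smul, Real.norm_eq_abs, dist_eq_norm]
  have dRA : dist R A = |m - l| * dist A C := by
    rw [dist_eq_norm, hr', hrv, norm_smul, Real.norm_eq_abs, dist_eq_norm]
  -- vector decompositions
  have hSA : S - A = (-m) • (B - A) + l • (C - A) := by
    have h1 : S - A = (Q - A) - (Q - S) := by abel
    rw [hq', hqv, hl'] at h1
    linear_combination (norm := module) h1
  have haO : A - O = (0:ℝ)•(B - A) + (0:ℝ)•(C - A) + (A - O) := by module
  have hbO : B - O = (1:ℝ)•(B - A) + (0:ℝ)•(C - A) + (A - O) := by module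
  have hcO : C - O = (0:ℝ)•(B - A) + (1:ℝ)•(C - A) + (A - O) := by module
  have hsO : S - O = (-m)•(B - A) + l•(C - A) + (A - O) := by
    have h1 : S - O = (S - A) + (A - O) := by abel
    rw [hSA] at h1
    rw [h1]
  have eA := haO ▸ sphere_inner_eq hA
  have eB := hbO ▸ sphere_inner_eq hB
  have eC := hcO ▸ sphere_inner_eq hC
  have eS := hsO ▸ sphere_inner_eq hS
  rw [inner_expand3] at eA eB eC eS
  have hcirc : m^2*⟪B-A,B-A⟫ + l^2*⟪C-A,C-A⟫ - 2*m*l*⟪B-A,C-A⟫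
      + m*⟪B-A,B-A⟫ - l*⟪C-A,C-A⟫ = 0 := by
    linear_combination eS + m*eB - l*eC - (1 + m - l)*eA
  -- squared distances
  have hSBv : S - B = (-m-1)•(B - A) + l•(C - A) := by
    have h1 : S - B = (S - A) - (B - A) := by abel
    rw [hSA] at h1
    rw [h1]; module
  have hSCv : S - C = (-m)•(B - A) + (l-1)•(C - A) := by
    have h1 : S - C = (S - A) - (C - A) := by abel
    rw [hSA] at h1
    rw [h1]; module
  have hSB2 : (dist S B)^2 = (-m-1)^2*⟪B-A,B-A⟫ + 2*(-m-1)*l*⟪B-A,C-A⟫ + l^2*⟪C-A,C-A⟫ := by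
    rw [dist_eq_norm, ← real_inner_self_eq_norm_sq, hSBv, inner_expand2]
  have hSC2 : (dist S C)^2 = (-m)^2*⟪B-A,B-A⟫ + 2*(-m)*(l-1)*⟪B-A,C-A⟫ + (l-1)^2*⟪C-A,C-A⟫ := by
    rw [dist_eq_norm, ← real_inner_self_eq_norm_sq, hSCv, inner_expand2]
  have hAB2 : (dist A B)^2 = ⟪B-A,B-A⟫ := by
    rw [dist_eq_norm, norm_sub_rev, ← real_inner_self_eq_norm_sq]
  have hAC2 : (dist A C)^2 = ⟪C-A,C-A⟫ := by
    rw [dist_eq_norm, norm_sub_rev, ← real_inner_self_eq_norm_sq]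
  -- the main squared identity
  have main : l^2*⟪C-A,C-A⟫*(dist S C)^2 = m^2*⟪B-A,B-A⟫*(dist S B)^2 := by
    rw [hSB2, hSC2]
    linear_combination (⟪B-A,B-A⟫*(-m)*(1+m) - ⟪C-A,C-A⟫*l*(1-l)) * hcirc
  -- nondegeneracy of the coefficients
  have hm0 : m ≠ 0 := by
    intro h
    apply hRS
    have h2 := hm'
    rw [h, zero_smul, sub_eq_zero] at h2
    exact h2
  have ht0 : m - l ≠ 0 := by
    intro h
    apply hQA
    have h2 := hq'
    rw [hqv, h, zero_smul, sub_eq_zero] at h2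
    exact h2
  have hBCd : dist B C ≠ 0 := dist_ne_zero.mpr hBC
  have hABd : dist A B ≠ 0 := dist_ne_zero.mpr hAB
  have hSCd : dist S C ≠ 0 := dist_ne_zero.mpr hSC
  -- the unsquared key identity
  have hkey : |l| * dist A C * dist S C = |m| * dist A B * dist S B := by
    have h2 : (|l| * dist A C * dist S C)^2 = (|m| * dist A B * dist S B)^2 := by
      rw [mul_pow, mul_pow, mul_pow, mul_pow, sq_abs, sq_abs, hAB2, hAC2]
      linear_combination main
    have h3 := congrArg Real.sqrt h2
    rwa [Real.sqrt_sq (by positivity), Real.sqrt_sq (by positivity)] at h3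
  -- finish
  rw [dQS, dRS, dQA, dRA]
  rw [mul_div_mul_right _ _ hBCd, mul_div_mul_left _ _ (abs_ne_zero.mpr ht0)]
  rw [div_mul_div_comm, div_eq_div_iff (by positivity) hSCd]
  linear_combination hkey
end

section
/- Let ABC be a triangle inscribed in circle ω, P a point on ω on the arc AB not containing C (so that A, P, B, C are in cyclic order appropriately), and suppose the identity 1/(CA·PB) = 1/(BC·PA) + 1/(AB·PC) holds together with Ptolemy's relation BC·PA = AB·PC - CA·PB. Then (BC·PA)/(CA·PB) = (1+√5)/2. -/
/-- If positive reals `BC, CA, AB, PA, PB, PC` satisfy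
`1/(CA·PB) = 1/(BC·PA) + 1/(AB·PC)` and Ptolemy's relation
`BC·PA = AB·PC - CA·PB`, then `(BC·PA)/(CA·PB)` is the golden ratio. -/
theorem golden_of_ptolemy_and_inv_rel (BC CA AB PA PB PC : ℝ)
    (hBC : 0 < BC) (hCA : 0 < CA) (hAB : 0 < AB)
    (hPA : 0 < PA) (hPB : 0 < PB) (hPC : 0 < PC)
    (h1 : 1 / (CA * PB) = 1 / (BC * PA) + 1 / (AB * PC))
    (h2 : BC * PA = AB * PC - CA * PB) :
    (BC * PA) / (CA * PB) = (1 + Real.sqrt 5) / 2 := by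
  set x := BC * PA with hx
  set y := CA * PB with hy
  set z := AB * PC with hz
  have hxp : 0 < x := mul_pos hBC hPA
  have hyp : 0 < y := mul_pos hCA hPB
  have hzp : 0 < z := mul_pos hAB hPC
  have key : x ^ 2 = y ^ 2 + x * y := by
    have hzz : z = x + y := by linarith
    field_simp at h1
    nlinarith [h1, hzz]
  set t := x / y with ht
  have htp : 0 < t := div_pos hxp hyp
  have htt : t ^ 2 = t + 1 := by
    rw [ht]; field_simp
    nlinarith [key]
  have h5 : (2 * t - 1) ^ 2 = 5 := by nlinarith
  have hs : Real.sqrt 5 = 2 * t - 1 := by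
    rw [show (5:ℝ) = (2*t-1)^2 from h5.symm]
    exact Real.sqrt_sq (by nlinarith)
  rw [hs]; ring
end
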